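/- Shor probability formula: Let f : ℕ → ℕ be periodic with period P, injective on {0,...,P−1}, let Q = Pq + r with 0 ≤ r < P and Q₀ = Pq, let ω = e^{2πi/Q}, and for y ∈ {0,...,Q−1} define Prob(y) = ‖Σ_{x=0}^{Q−1} ω^{xy} |f(x)⟩‖² / Q², where {|f(x)⟩ : x ∈ {0,...,P−1}} are orthonormal vectors. Then if Py ≠ 0 mod Q, Prob(y) = [r sin²((πPy/Q)(Q₀/P + 1)) + (P−r) sin²((πPy/Q)(Q₀/P))] / [Q² sin²(πPy/Q)], and if Py ≡ 0 mod Q, Prob(y) = [r(Q₀+P)² + (P−r)Q₀²] / (Q²P²). -/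

import Mathlib

open Finset
open Finset

private lemma shor_orthonormal_norm_sum {E : Type*} [NormedAddCommGroup E]
    [InnerProductSpace ℂ E] {ι : Type*} {v : ι → E} (hv : Orthonormal ℂ v)
    (l : ι → ℂ) (s : Finset ι) :
    ‖∑ i ∈ s, l i • v i‖ ^ 2 = ∑ i ∈ s, ‖l i‖ ^ 2 := by
  rw [@norm_sq_eq_re_inner ℂ, hv.inner_sum l l s, map_sum]
  refine Finset.sum_congr rfl fun i _ => ?_
  rw [← Complex.normSq_eq_conj_mul_self]
  simp [Complex.normSq_eq_norm_sq, ← Complex.ofReal_pow]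

private lemma shor_norm_exp_sub_one (s : ℝ) :
    ‖Complex.exp ((s : ℂ) * Complex.I) - 1‖ ^ 2 = 4 * Real.sin (s / 2) ^ 2 := by
  have h1 : Complex.exp ((s : ℂ) * Complex.I) - 1
      = ((Real.cos s - 1 : ℝ) : ℂ) + ((Real.sin s : ℝ) : ℂ) * Complex.I := by
    rw [Complex.exp_mul_I]
    push_cast [← Complex.ofReal_cos, ← Complex.ofReal_sin]
    ring
  rw [h1, Complex.sq_norm, Complex.normSq_add_mul_I]
  have h2 : Real.cos s = 1 - 2 * Real.sin (s / 2) ^ 2 := by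
    have hh := Real.cos_two_mul (s / 2)
    have h3 := Real.sin_sq_add_cos_sq (s / 2)
    have h4 : 2 * (s / 2) = s := by ring
    rw [h4] at hh
    linarith
  have h4 := Real.sin_sq_add_cos_sq s
  nlinarith

private lemma shor_geom_norm (t : ℝ) (m : ℕ) (h : Real.sin (t / 2) ≠ 0) :
    ‖∑ a ∈ Finset.range m, Complex.exp ((t : ℂ) * Complex.I) ^ a‖ ^ 2
      = Real.sin (m * t / 2) ^ 2 / Real.sin (t / 2) ^ 2 := by
  have hz : Complex.exp ((t : ℂ) * Complex.I) ≠ 1 := by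
    intro hc
    obtain ⟨n, hn⟩ := Complex.exp_eq_one_iff.mp hc
    have ht : t = n * (2 * Real.pi) := by
      have h5 : ((t : ℂ)) = (n : ℂ) * (2 * Real.pi) := by
        refine mul_right_cancel₀ Complex.I_ne_zero ?_
        push_cast [Complex.ofReal_one]
        linear_combination hn
      exact_mod_cast h5
    apply h
    rw [ht]
    have h6 : (n : ℝ) * (2 * Real.pi) / 2 = n * Real.pi := by ring
    rw [h6, Real.sin_int_mul_pi]
  rw [geom_sum_eq hz, ← Complex.exp_nat_mul]
  have hmt : ((m : ℂ)) * ((t : ℂ) * Complex.I) = ((m * t : ℝ) : ℂ) * Complex.I := by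
    push_cast; ring
  rw [hmt, norm_div, div_pow, shor_norm_exp_sub_one, shor_norm_exp_sub_one,
    mul_div_mul_left _ _ (by norm_num : (4:ℝ) ≠ 0)]

private lemma shor_sum_decomp {M : Type*} [AddCommMonoid M] (g : ℕ → M)
    (P q r : ℕ) (hP : 0 < P) (hr : r < P) :
    ∑ x ∈ Finset.range (P * q + r), g x
      = ∑ b ∈ Finset.range P, ∑ a ∈ Finset.range (if b < r then q + 1 else q),
          g (a * P + b) := by
  rw [Finset.sum_sigma']
  refine (Finset.sum_bij' (fun x (_ : x ∈ Finset.range (P * q + r)) => (⟨x % P, x / P⟩ : Σ _ : ℕ, ℕ))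
    (fun p _ => p.2 * P + p.1) ?_ ?_ ?_ ?_ ?_)
  · intro x hx
    simp only [Finset.mem_range] at hx
    simp only [Finset.mem_sigma, Finset.mem_range]
    refine ⟨Nat.mod_lt _ hP, ?_⟩
    split_ifs with hb
    · have h7 : x < P * q + P := lt_of_lt_of_le hx (Nat.add_le_add_left hr.le _)
      exact (Nat.div_lt_iff_lt_mul hP).mpr (by rw [add_mul, one_mul, mul_comm]; exact h7)
    · by_contra hc
      push_neg at hc
      have h5 : P * q + r ≤ x := by
        calc P * q + r ≤ P * (x / P) + x % P :=
              Nat.add_le_add (Nat.mul_le_mul_left _ hc) (le_of_not_gt hb)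
          _ = x := Nat.div_add_mod x P
      exact absurd hx (not_lt.mpr h5)
  · intro p hp
    simp only [Finset.mem_sigma, Finset.mem_range] at hp
    simp only [Finset.mem_range]
    obtain ⟨h1, h2⟩ := hp
    split_ifs at h2 with hb
    · have h3 : p.2 * P ≤ q * P := Nat.mul_le_mul_right _ (by omega)
      calc p.2 * P + p.1 ≤ q * P + p.1 := Nat.add_le_add_right h3 _
        _ < q * P + r := Nat.add_lt_add_left hb _
        _ = P * q + r := by rw [mul_comm]
    · have h3 : (p.2 + 1) * P ≤ q * P := Nat.mul_le_mul_right _ (by omega)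
      calc p.2 * P + p.1 < (p.2 + 1) * P := by rw [add_mul, one_mul]; omega
        _ ≤ q * P := h3
        _ ≤ P * q + r := by rw [mul_comm]; omega
  · intro x hx
    exact Nat.div_add_mod' x P
  · intro p hp
    simp only [Finset.mem_sigma, Finset.mem_range] at hp
    obtain ⟨h1, _⟩ := hp
    have e1 : (p.2 * P + p.1) % P = p.1 := by
      rw [add_comm, Nat.add_mul_mod_self_right, Nat.mod_eq_of_lt h1]
    have e2 : (p.2 * P + p.1) / P = p.2 := by
      rw [add_comm, Nat.add_mul_div_right _ _ hP, Nat.div_eq_of_lt h1, zero_add]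
    exact Sigma.ext e1 (heq_of_eq (by exact e2))
  · intro x hx
    rw [Nat.div_add_mod' x P]


/-- Shor probability formula.  Let `f : ℕ → ℕ` be periodic of period `P` and
injective on `{0,…,P-1}`, with `Q = Pq + r`, `0 ≤ r < P`, `Q₀ = Pq`,
`ω = e^{2πi/Q}`, and the kets `|f(0)⟩,…,|f(P-1)⟩` orthonormal.  For
`y ∈ {0,…,Q-1}` let `Prob(y) = ‖∑_{x<Q} ω^{xy} |f(x)⟩‖² / Q²`.  Then `Prob(y)`
is given by the sine formula when `Py ≢ 0 (mod Q)` and by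
`(r(Q₀+P)² + (P-r)Q₀²)/(Q²P²)` when `Py ≡ 0 (mod Q)`. -/
theorem shor_probability
    {E : Type*} [NormedAddCommGroup E] [InnerProductSpace ℂ E]
    (P q r Q : ℕ) (hP : 0 < P) (hr : r < P) (hQ : Q = P * q + r) (hPQ : P ≤ Q)
    (f : ℕ → ℕ) (hper : ∀ x, f (x + P) = f x)
    (hinj : ∀ i j, i < P → j < P → f i = f j → i = j)
    (e : ℕ → E) (horth : Orthonormal ℂ (fun j : Fin P => e (f j)))
    (y : ℕ) (hy : y < Q) :
    let ω : ℂ := Complex.exp (2 * (Real.pi : ℂ) * Complex.I / (Q : ℂ))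
    let Q₀ : ℕ := P * q
    let Prob : ℝ :=
      ‖∑ x ∈ Finset.range Q, ω ^ (x * y) • e (f x)‖ ^ 2 / (Q : ℝ) ^ 2
    (¬ (Q ∣ P * y) →
      Prob = ((r : ℝ) * Real.sin (Real.pi * P * y / Q * ((Q₀ : ℝ) / P + 1)) ^ 2
            + ((P : ℝ) - r) * Real.sin (Real.pi * P * y / Q * ((Q₀ : ℝ) / P)) ^ 2)
          / ((Q : ℝ) ^ 2 * Real.sin (Real.pi * P * y / Q) ^ 2)) ∧
    ((Q ∣ P * y) →
      Prob = ((r : ℝ) * ((Q₀ : ℝ) + P) ^ 2 + ((P : ℝ) - r) * (Q₀ : ℝ) ^ 2)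
          / ((Q : ℝ) ^ 2 * (P : ℝ) ^ 2)) := by
  intro ω Q₀ Prob
  have hQ0 : 0 < Q := lt_of_lt_of_le hP hPQ
  have hQC : (Q : ℂ) ≠ 0 := Nat.cast_ne_zero.mpr hQ0.ne'
  have hQR : (Q : ℝ) ≠ 0 := Nat.cast_ne_zero.mpr hQ0.ne'
  have hPR : (P : ℝ) ≠ 0 := Nat.cast_ne_zero.mpr hP.ne'
  -- powers of ω
  have hpow : ∀ n : ℕ, ω ^ n
      = Complex.exp (((2 * Real.pi * n / Q : ℝ) : ℂ) * Complex.I) := by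
    intro n
    show Complex.exp (2 * (Real.pi : ℂ) * Complex.I / (Q : ℂ)) ^ n = _
    rw [← Complex.exp_nat_mul]
    congr 1
    push_cast
    field_simp
  have hnorm1 : ∀ n : ℕ, ‖ω ^ n‖ = 1 := by
    intro n
    rw [hpow n, Complex.norm_exp_ofReal_mul_I]
  -- periodicity
  have hfp : ∀ a b, f (a * P + b) = f b := by
    intro a
    induction a with
    | zero => intro b; simp
    | succ n ih =>
      intro b
      have h : (n + 1) * P + b = (n * P + b) + P := by ring
      rw [h, hper, ih]
  set z : ℂ := ω ^ (P * y) with hzdef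
  set S : ℕ → ℂ := fun m => ∑ a ∈ Finset.range m, z ^ a with hSdef
  set c : ℕ → ℂ := fun b => ω ^ (b * y) * S (if b < r then q + 1 else q) with hcdef
  -- the sum decomposition
  have hsum : ∑ x ∈ Finset.range Q, ω ^ (x * y) • e (f x)
      = ∑ b ∈ Finset.range P, c b • e (f b) := by
    rw [hQ, shor_sum_decomp (fun x => ω ^ (x * y) • e (f x)) P q r hP hr]
    refine Finset.sum_congr rfl fun b _ => ?_
    have hterm : ∀ a, ω ^ ((a * P + b) * y) • e (f (a * P + b))
        = (ω ^ (b * y) * z ^ a) • e (f b) := by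
      intro a
      rw [hfp, hzdef, ← pow_mul, ← pow_add]
      congr 2
      ring
    simp_rw [hterm]
    rw [← Finset.sum_smul, ← Finset.mul_sum]
  -- norm via orthonormality
  have hnormsum : ‖∑ x ∈ Finset.range Q, ω ^ (x * y) • e (f x)‖ ^ 2
      = ∑ b ∈ Finset.range P, ‖S (if b < r then q + 1 else q)‖ ^ 2 := by
    rw [hsum, ← Fin.sum_univ_eq_sum_range (fun b => c b • e (f b)) P,
      shor_orthonormal_norm_sum horth (fun j : Fin P => c j) Finset.univ,
      Fin.sum_univ_eq_sum_range (fun b => ‖c b‖ ^ 2) P]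
    refine Finset.sum_congr rfl fun b _ => ?_
    rw [hcdef]
    simp only
    rw [norm_mul, hnorm1, one_mul]
  -- split the sum
  have hsplit : ∑ b ∈ Finset.range P, ‖S (if b < r then q + 1 else q)‖ ^ 2
      = (r : ℝ) * ‖S (q + 1)‖ ^ 2 + ((P : ℝ) - r) * ‖S q‖ ^ 2 := by
    rw [Finset.range_eq_Ico, ← Finset.sum_Ico_consecutive _ (Nat.zero_le r) hr.le]
    have h1 : ∑ b ∈ Finset.Ico 0 r, ‖S (if b < r then q + 1 else q)‖ ^ 2
        = (r : ℝ) * ‖S (q + 1)‖ ^ 2 := by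
      rw [Finset.sum_congr rfl (fun b hb => ?_), Finset.sum_const, Nat.card_Ico,
        Nat.sub_zero, nsmul_eq_mul]
      simp only [Finset.mem_Ico] at hb
      rw [if_pos hb.2]
    have h2 : ∑ b ∈ Finset.Ico r P, ‖S (if b < r then q + 1 else q)‖ ^ 2
        = ((P : ℝ) - r) * ‖S q‖ ^ 2 := by
      rw [Finset.sum_congr rfl (fun b hb => ?_), Finset.sum_const, Nat.card_Ico,
        nsmul_eq_mul, Nat.cast_sub hr.le]
      simp only [Finset.mem_Ico] at hb
      rw [if_neg (by omega)]
    rw [h1, h2]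
  constructor
  · -- non-divisible case
    intro hdvd
    have hsin : Real.sin (Real.pi * P * y / Q) ≠ 0 := by
      intro hc
      obtain ⟨n, hn⟩ := Real.sin_eq_zero_iff.mp hc
      apply hdvd
      have hpi : Real.pi ≠ 0 := Real.pi_ne_zero
      have h8 : ((n : ℝ) * Real.pi) * Q = (Real.pi * P * y / Q) * Q := by rw [hn]
      rw [div_mul_cancel₀ _ hQR] at h8
      have h9 : (P : ℝ) * y = (n : ℝ) * Q := by
        refine mul_left_cancel₀ hpi ?_
        linear_combination -h8
      have hn0 : (0 : ℝ) ≤ (n : ℝ) * Q := by rw [← h9]; positivity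
      have hnn : 0 ≤ n := by
        by_contra hneg
        push_neg at hneg
        have hlt : (n : ℝ) * Q < 0 := by
          apply mul_neg_of_neg_of_pos
          · exact_mod_cast hneg
          · exact_mod_cast hQ0
        linarith
      obtain ⟨k, rfl⟩ := Int.eq_ofNat_of_zero_le hnn
      refine ⟨k, ?_⟩
      have h10 : ((P * y : ℕ) : ℝ) = ((Q * k : ℕ) : ℝ) := by
        push_cast
        push_cast at h9
        linear_combination h9
      exact_mod_cast h10
    -- angle identities
    have hzexp : z = Complex.exp (((2 * Real.pi * (P * y : ℕ) / Q : ℝ) : ℂ)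
        * Complex.I) := hpow _
    have hhalf : (2 * Real.pi * ((P * y : ℕ) : ℝ) / Q) / 2 = Real.pi * P * y / Q := by
      push_cast; ring
    have hsin2 : Real.sin ((2 * Real.pi * ((P * y : ℕ) : ℝ) / Q) / 2) ≠ 0 := by
      rw [hhalf]; exact hsin
    have hA : ‖S (q + 1)‖ ^ 2
        = Real.sin (Real.pi * P * y / Q * ((Q₀ : ℝ) / P + 1)) ^ 2
          / Real.sin (Real.pi * P * y / Q) ^ 2 := by
      rw [hSdef]
      simp only
      rw [hzexp, shor_geom_norm _ _ hsin2, hhalf]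
      congr 3
      show ((q + 1 : ℕ) : ℝ) * (2 * Real.pi * ((P * y : ℕ) : ℝ) / Q) / 2
        = Real.pi * P * y / Q * (((P * q : ℕ) : ℝ) / P + 1)
      push_cast
      field_simp
    have hB : ‖S q‖ ^ 2
        = Real.sin (Real.pi * P * y / Q * ((Q₀ : ℝ) / P)) ^ 2
          / Real.sin (Real.pi * P * y / Q) ^ 2 := by
      rw [hSdef]
      simp only
      rw [hzexp, shor_geom_norm _ _ hsin2, hhalf]
      congr 3
      show ((q : ℕ) : ℝ) * (2 * Real.pi * ((P * y : ℕ) : ℝ) / Q) / 2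
        = Real.pi * P * y / Q * (((P * q : ℕ) : ℝ) / P)
      push_cast
      field_simp
    show ‖∑ x ∈ Finset.range Q, ω ^ (x * y) • e (f x)‖ ^ 2 / (Q : ℝ) ^ 2 = _
    rw [hnormsum, hsplit, hA, hB]
    have hs2 : Real.sin (Real.pi * P * y / Q) ^ 2 ≠ 0 := pow_ne_zero _ hsin
    generalize Real.sin (Real.pi * (P:ℝ) * y / Q * ((Q₀ : ℝ) / P + 1)) ^ 2 = X
    generalize Real.sin (Real.pi * (P:ℝ) * y / Q * ((Q₀ : ℝ) / P)) ^ 2 = Y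
    rw [← mul_div_assoc, ← mul_div_assoc, ← add_div, div_div,
      mul_comm (Real.sin (Real.pi * (P:ℝ) * y / Q) ^ 2)]
  · -- divisible case
    intro hdvd
    have hz1 : z = 1 := by
      obtain ⟨k, hk⟩ := hdvd
      rw [hzdef, hpow, hk]
      have harg : ((2 * Real.pi * ((Q * k : ℕ) : ℝ) / Q : ℝ) : ℂ) * Complex.I
          = (k : ℕ) * (2 * Real.pi * Complex.I) := by
        push_cast
        field_simp
      rw [harg, Complex.exp_nat_mul_two_pi_mul_I]
    have hSval : ∀ m : ℕ, ‖S m‖ ^ 2 = (m : ℝ) ^ 2 := by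
      intro m
      rw [hSdef]
      simp only [hz1, one_pow, Finset.sum_const, Finset.card_range, nsmul_eq_mul,
        mul_one]
      rw [Complex.norm_natCast]
    show ‖∑ x ∈ Finset.range Q, ω ^ (x * y) • e (f x)‖ ^ 2 / (Q : ℝ) ^ 2 = _
    rw [hnormsum, hsplit, hSval, hSval]
    show _ = ((r : ℝ) * (((P * q : ℕ) : ℝ) + P) ^ 2
        + ((P : ℝ) - r) * ((P * q : ℕ) : ℝ) ^ 2) / ((Q : ℝ) ^ 2 * (P : ℝ) ^ 2)
    push_cast
    field_simp
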